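/- The star-controlled GCID system with two components, alphabet V = {a, b, A, B}, terminal alphabet T = {a, b}, axiom set {AB} in component C1, initial component C1, final component set {C1}, and rules r1.1: (1, (A, a, λ)_I, 2), r2.1: (2, (B, b, λ)_I, 1), r1.2: (1, (λ, A, λ)_D, 2), r2.2: (2, (λ, B, λ)_D, 1) generates exactly the language { aⁿbⁿ : n ≥ 0 }; in particular, the non-regular language { aⁿbⁿ : n ≥ 0 } belongs to GCID_S(2; 1, 1, 0; 1, 0, 0). -/

import Mathlib

/-!
Graph-controlled insertion-deletion (GCID) systems.

Symbols are drawn from the universal symbol set `ℕ`, strings are lists of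
symbols.  A GCID system `Π = (k, V, T, A, H, i0, F, R)` has `k` components;
rules `(i, r, j)` move a string from component `i` to component `j`, where
`r` is an insertion rule `(u, η, v)_I` (rewriting `uv → uηv`) or a deletion
rule `(u, δ, v)_D` (rewriting `uδv → uv`), with `u, v ∈ V*` and `η, δ ∈ V⁺`.
-/

namespace GCIDPaper

/-- Strings over the universal symbol set `ℕ`. -/
abbrev Word : Type := List ℕ

/-- An insertion rule `(u, s, v)_I` (when `isInsertion = true`) or a deletion
rule `(u, s, v)_D` (when `isInsertion = false`), with left context `lctx = u`,
inserted resp. deleted string `core = s`, and right context `rctx = v`. -/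
structure InsDelRule : Type where
  isInsertion : Bool
  lctx : Word
  core : Word
  rctx : Word
  deriving DecidableEq

/-- The insertion rule `(u, η, v)_I`. -/
def insRule (u η v : Word) : InsDelRule := ⟨true, u, η, v⟩

/-- The deletion rule `(u, δ, v)_D`. -/
def delRule (u δ v : Word) : InsDelRule := ⟨false, u, δ, v⟩

/-- Applying a rule to a string: the insertion rule `(u, η, v)_I` corresponds
to the rewriting `uv → uηv`, the deletion rule `(u, δ, v)_D` to `uδv → uv`. -/
def InsDelRule.Applies (r : InsDelRule) (w w' : Word) : Prop :=
  (r.isInsertion = true →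
    ∃ x y, w = x ++ r.lctx ++ r.rctx ++ y ∧
      w' = x ++ r.lctx ++ r.core ++ r.rctx ++ y) ∧
  (r.isInsertion = false →
    ∃ x y, w = x ++ r.lctx ++ r.core ++ r.rctx ++ y ∧
      w' = x ++ r.lctx ++ r.rctx ++ y)

/-- A graph-controlled insertion-deletion system.  The components are
numbered `1, …, k`; `i0` is the initial component, `F` the set of final
components, `axioms` the finite set of axioms (placed in component `i0`),
and `R` the finite set of rules `(i, r, j)`. -/
structure System : Type where
  k : ℕ
  V : Finset ℕ
  T : Finset ℕ
  axioms : Finset Word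
  i0 : ℕ
  F : Finset ℕ
  R : Finset (ℕ × InsDelRule × ℕ)
  k_pos : 1 ≤ k
  T_sub_V : T ⊆ V
  axioms_over_V : ∀ w ∈ axioms, ∀ a ∈ w, a ∈ V
  i0_mem : i0 ∈ Finset.Icc 1 k
  F_sub : F ⊆ Finset.Icc 1 k
  R_wf : ∀ q ∈ R, q.1 ∈ Finset.Icc 1 k ∧ q.2.2 ∈ Finset.Icc 1 k ∧
    q.2.1.core ≠ [] ∧ (∀ a ∈ q.2.1.lctx, a ∈ V) ∧
    (∀ a ∈ q.2.1.core, a ∈ V) ∧ (∀ a ∈ q.2.1.rctx, a ∈ V)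

/-- One derivation step between configurations: `(w)_i ⇒ (w')_j` if some rule
`(i, r, j)` of the system applied to `w` yields `w'`. -/
def Step (S : System) (c c' : Word × ℕ) : Prop :=
  ∃ q ∈ S.R, q.1 = c.2 ∧ q.2.2 = c'.2 ∧ q.2.1.Applies c.1 c'.1

/-- The reflexive-transitive closure `⇒*` of the step relation. -/
def Derives (S : System) : Word × ℕ → Word × ℕ → Prop :=
  Relation.ReflTransGen (Step S)

/-- The language generated:
`L(Π) = { w ∈ T* : (x)_{i0} ⇒* (w)_{i_f} for some axiom x and some i_f ∈ F }`. -/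
def language (S : System) : Set Word :=
  { w | (∀ a ∈ w, a ∈ S.T) ∧
    ∃ x ∈ S.axioms, ∃ f ∈ S.F, Derives S (x, S.i0) (w, f) }

/-- A single rule obeys the size bounds `(n, i', i''; m, j', j'')`. -/
def InsDelRule.SizeLE (r : InsDelRule) (n i' i'' m j' j'' : ℕ) : Prop :=
  (r.isInsertion = true →
    r.core.length ≤ n ∧ r.lctx.length ≤ i' ∧ r.rctx.length ≤ i'') ∧
  (r.isInsertion = false →
    r.core.length ≤ m ∧ r.lctx.length ≤ j' ∧ r.rctx.length ≤ j'')

/-- The system has size `(k; n, i', i''; m, j', j'')`. -/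
def HasSize (S : System) (k n i' i'' m j' j'' : ℕ) : Prop :=
  S.k = k ∧ ∀ q ∈ S.R, q.2.1.SizeLE n i' i'' m j' j''

/-- Star-controlled: the underlying undirected control graph (with an edge
`{Ci, Cj}` whenever there is a rule `(i, r, j)`) has exactly the edge set
`{ {C1, Ci} : 2 ≤ i ≤ k }`; in particular there are no loops. -/
def StarControlled (S : System) : Prop :=
  (∀ q ∈ S.R, ∃ i ∈ Finset.Icc 2 S.k, ({q.1, q.2.2} : Finset ℕ) = {1, i}) ∧
  (∀ i ∈ Finset.Icc 2 S.k, ∃ q ∈ S.R, ({q.1, q.2.2} : Finset ℕ) = {1, i})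

/-- The class `GCID(k; n, i', i''; m, j', j'')` of languages generated by GCID
systems of the given size. -/
def GCIDClass (k n i' i'' m j' j'' : ℕ) : Set (Set Word) :=
  { L | ∃ S : System, HasSize S k n i' i'' m j' j'' ∧ language S = L }

/-- The class `GCID_S(k; n, i', i''; m, j', j'')` of languages generated by
star-controlled GCID systems of the given size. -/
def GCID_S (k n i' i'' m j' j'' : ℕ) : Set (Set Word) :=
  { L | ∃ S : System, StarControlled S ∧ HasSize S k n i' i'' m j' j'' ∧
    language S = L }

/-- The star-controlled GCID system with two components, alphabet
`V = {a, b, A, B}` (encoded as `a = 0`, `b = 1`, `A = 2`, `B = 3`), terminal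
alphabet `T = {a, b}`, axiom `AB` in component `C1`, initial component `C1`,
final component set `{C1}`, and rules
`r1.1 : (1, (A, a, λ)_I, 2)`, `r2.1 : (2, (B, b, λ)_I, 1)`,
`r1.2 : (1, (λ, A, λ)_D, 2)`, `r2.2 : (2, (λ, B, λ)_D, 1)`. -/
def anbnSystem : System where
  k := 2
  V := {0, 1, 2, 3}
  T := {0, 1}
  axioms := {[2, 3]}
  i0 := 1
  F := {1}
  R := {(1, insRule [2] [0] [], 2), (2, insRule [3] [1] [], 1),
        (1, delRule [] [2] [], 2), (2, delRule [] [3] [], 1)}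
  k_pos := by decide
  T_sub_V := by decide
  axioms_over_V := by decide
  i0_mem := by decide
  F_sub := by decide
  R_wf := by decide

/-- The language `{ aⁿbⁿ : n ≥ 0 }`. -/
def anbnLang : Set Word :=
  { w | ∃ n : ℕ, w = List.replicate n 0 ++ List.replicate n 1 }


private abbrev aa (n : ℕ) : Word := List.replicate n 0
private abbrev bb (n : ℕ) : Word := List.replicate n 1

private lemma unique_split {c : ℕ} : ∀ {s x t y : Word}, c ∉ s → c ∉ t →
    x ++ c :: y = s ++ c :: t → x = s ∧ y = t := by
  intro s
  induction s with
  | nil =>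
    intro x t y _ ht h
    cases x with
    | nil => simpa using h
    | cons d x' =>
      simp only [List.nil_append, List.cons_append, List.cons.injEq] at h
      exact absurd (h.2 ▸ (by simp : c ∈ x' ++ c :: y)) ht
  | cons d s' ih =>
    intro x t y hs ht h
    simp only [List.mem_cons, not_or] at hs
    cases x with
    | nil =>
      simp only [List.nil_append, List.cons_append, List.cons.injEq] at h
      exact absurd h.1 hs.1
    | cons e x' =>
      simp only [List.cons_append, List.cons.injEq] at h
      have := ih hs.2 ht h.2
      exact ⟨by rw [h.1, this.1], this.2⟩

private lemma split_head {c : ℕ} {t x y : Word} (ht : c ∉ t)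
    (h : x ++ c :: y = c :: t) : x = [] ∧ y = t :=
  unique_split List.not_mem_nil ht (by simpa using h)

private def Inv : Word × ℕ → Prop := fun p =>
  (p.2 = 1 ∧ (
     (∃ n, p.1 = 2 :: (aa n ++ 3 :: bb n)) ∨
     (∃ n, p.1 = aa n ++ bb n) ∨
     (∃ n m, p.1 = 2 :: (aa n ++ bb m)) ∨
     ((2:ℕ) ∉ p.1 ∧ (3:ℕ) ∈ p.1))) ∨
  (p.2 = 2 ∧ (
     (∃ n, p.1 = 2 :: (aa (n+1) ++ 3 :: bb n)) ∨
     (∃ n, p.1 = aa n ++ 3 :: bb n) ∨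
     ((3:ℕ) ∉ p.1)))

private lemma two_notmem_ab {n m : ℕ} : (2:ℕ) ∉ aa n ++ bb m := by
  simp [aa, bb, List.mem_replicate]

private lemma two_notmem_aBb {n m : ℕ} : (2:ℕ) ∉ aa n ++ 3 :: bb m := by
  simp [aa, bb, List.mem_replicate]

private lemma three_notmem_ab {n m : ℕ} : (3:ℕ) ∉ aa n ++ bb m := by
  simp [aa, bb, List.mem_replicate]

private lemma three_notmem_a {n : ℕ} : (3:ℕ) ∉ (2:ℕ) :: aa n := by
  simp [aa, List.mem_replicate]

private lemma inv_step {c c' : Word × ℕ} (hc : Inv c)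
    (h : Step anbnSystem c c') : Inv c' := by
  obtain ⟨q, hq, h1, h2, happ⟩ := h
  simp only [anbnSystem, Finset.mem_insert, Finset.mem_singleton] at hq
  rcases hq with rfl | rfl | rfl | rfl
  · -- r1.1 : insert 0 after 2, C1 → C2
    obtain ⟨x, y, hw, hw'⟩ := happ.1 rfl
    simp only [insRule, List.append_nil, List.append_assoc, List.singleton_append] at hw hw'
    rcases hc with ⟨_, hc⟩ | ⟨hc2, _⟩
    · rcases hc with ⟨n, hn⟩ | ⟨n, hn⟩ | ⟨n, m, hn⟩ | ⟨hn2, hn3⟩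
      · rw [hn] at hw
        obtain ⟨rfl, rfl⟩ := split_head two_notmem_aBb hw.symm
        refine Or.inr ⟨h2.symm, Or.inl ⟨n, ?_⟩⟩
        rw [hw']; simp [aa, List.replicate_succ]
      · exact absurd (hw ▸ (by simp : (2:ℕ) ∈ x ++ 2 :: y)) (hn ▸ two_notmem_ab)
      · rw [hn] at hw
        obtain ⟨rfl, rfl⟩ := split_head two_notmem_ab hw.symm
        refine Or.inr ⟨h2.symm, Or.inr (Or.inr ?_)⟩
        rw [hw']; simp [aa, bb, List.mem_replicate]
      · exact absurd (hw ▸ (by simp : (2:ℕ) ∈ x ++ 2 :: y)) hn2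
    · rw [← h1] at hc2; exact absurd hc2 (by decide)
  · -- r2.1 : insert 1 after 3, C2 → C1
    obtain ⟨x, y, hw, hw'⟩ := happ.1 rfl
    simp only [insRule, List.append_nil, List.append_assoc, List.singleton_append] at hw hw'
    rcases hc with ⟨hc2, _⟩ | ⟨_, hc⟩
    · rw [← h1] at hc2; exact absurd hc2 (by decide)
    · rcases hc with ⟨n, hn⟩ | ⟨n, hn⟩ | hn3
      · rw [hn] at hw
        obtain ⟨rfl, rfl⟩ := unique_split (s := 2 :: aa (n+1)) (t := bb n)
          three_notmem_a (by simp [bb, List.mem_replicate]) (hw.symm.trans (by simp))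
        refine Or.inl ⟨h2.symm, Or.inl ⟨n+1, ?_⟩⟩
        rw [hw']; simp [bb, List.replicate_succ]
      · rw [hn] at hw
        obtain ⟨rfl, rfl⟩ := unique_split (s := aa n) (t := bb n)
          (by simp [aa, List.mem_replicate]) (by simp [bb, List.mem_replicate]) hw.symm
        refine Or.inl ⟨h2.symm, Or.inr (Or.inr (Or.inr ⟨?_, ?_⟩))⟩
        · rw [hw']; simp [aa, bb, List.mem_replicate]
        · rw [hw']; simp
      · exact absurd (hw ▸ (by simp : (3:ℕ) ∈ x ++ 3 :: y)) hn3
  · -- r1.2 : delete 2, C1 → C2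
    obtain ⟨x, y, hw, hw'⟩ := happ.2 rfl
    simp only [delRule, List.append_nil, List.append_assoc, List.nil_append,
      List.singleton_append] at hw hw'
    rcases hc with ⟨_, hc⟩ | ⟨hc2, _⟩
    · rcases hc with ⟨n, hn⟩ | ⟨n, hn⟩ | ⟨n, m, hn⟩ | ⟨hn2, hn3⟩
      · rw [hn] at hw
        obtain ⟨rfl, rfl⟩ := split_head two_notmem_aBb hw.symm
        exact Or.inr ⟨h2.symm, Or.inr (Or.inl ⟨n, by rw [hw']; simp⟩)⟩
      · exact absurd (hw ▸ (by simp : (2:ℕ) ∈ x ++ 2 :: y)) (hn ▸ two_notmem_ab)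
      · rw [hn] at hw
        obtain ⟨rfl, rfl⟩ := split_head two_notmem_ab hw.symm
        refine Or.inr ⟨h2.symm, Or.inr (Or.inr ?_)⟩
        rw [hw']; simp [aa, bb, List.mem_replicate]
      · exact absurd (hw ▸ (by simp : (2:ℕ) ∈ x ++ 2 :: y)) hn2
    · rw [← h1] at hc2; exact absurd hc2 (by decide)
  · -- r2.2 : delete 3, C2 → C1
    obtain ⟨x, y, hw, hw'⟩ := happ.2 rfl
    simp only [delRule, List.append_nil, List.append_assoc, List.nil_append,
      List.singleton_append] at hw hw'
    rcases hc with ⟨hc2, _⟩ | ⟨_, hc⟩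
    · rw [← h1] at hc2; exact absurd hc2 (by decide)
    · rcases hc with ⟨n, hn⟩ | ⟨n, hn⟩ | hn3
      · rw [hn] at hw
        obtain ⟨rfl, rfl⟩ := unique_split (s := 2 :: aa (n+1)) (t := bb n)
          three_notmem_a (by simp [bb, List.mem_replicate]) (hw.symm.trans (by simp))
        refine Or.inl ⟨h2.symm, Or.inr (Or.inr (Or.inl ⟨n+1, n, ?_⟩))⟩
        rw [hw']; simp
      · rw [hn] at hw
        obtain ⟨rfl, rfl⟩ := unique_split (s := aa n) (t := bb n)
          (by simp [aa, List.mem_replicate]) (by simp [bb, List.mem_replicate]) hw.symm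
        exact Or.inl ⟨h2.symm, Or.inr (Or.inl ⟨n, by rw [hw']⟩)⟩
      · exact absurd (hw ▸ (by simp : (3:ℕ) ∈ x ++ 3 :: y)) hn3

private lemma inv_derives {c c' : Word × ℕ} (h : Derives anbnSystem c c')
    (hc : Inv c) : Inv c' := by
  have h' : Relation.ReflTransGen (Step anbnSystem) c c' := h
  clear h
  induction h' with
  | refl => exact hc
  | tail _ hstep ih => exact inv_step ih hstep

private lemma derives_main (n : ℕ) :
    Derives anbnSystem ([2,3], 1) ((2 :: (aa n ++ 3 :: bb n) : Word), 1) := by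
  induction n with
  | zero => exact Relation.ReflTransGen.refl
  | succ n ih =>
    refine Relation.ReflTransGen.trans ih ?_
    refine Relation.ReflTransGen.head
      (b := ((2 :: (aa (n+1) ++ 3 :: bb n) : Word), 2)) ?_
      (Relation.ReflTransGen.single ?_)
    · refine ⟨(1, insRule [2] [0] [], 2), by simp [anbnSystem], rfl, rfl, ?_, ?_⟩
      · intro _
        exact ⟨[], aa n ++ 3 :: bb n, by simp [insRule], by simp [insRule, aa, List.replicate_succ]⟩
      · intro h; simp [insRule] at h
    · refine ⟨(2, insRule [3] [1] [], 1), by simp [anbnSystem], rfl, rfl, ?_, ?_⟩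
      · intro _
        exact ⟨2 :: aa (n+1), bb n, by simp [insRule], by simp [insRule, bb, List.replicate_succ]⟩
      · intro h; simp [insRule] at h

private lemma derives_final (n : ℕ) :
    Derives anbnSystem ([2,3], 1) ((aa n ++ bb n : Word), 1) := by
  refine Relation.ReflTransGen.trans (derives_main n) ?_
  refine Relation.ReflTransGen.head (b := ((aa n ++ 3 :: bb n : Word), 2)) ?_
    (Relation.ReflTransGen.single ?_)
  · refine ⟨(1, delRule [] [2] [], 2), by simp [anbnSystem], rfl, rfl, ?_, ?_⟩
    · intro h; simp [delRule] at h
    · intro _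
      exact ⟨[], aa n ++ 3 :: bb n, by simp [delRule], by simp [delRule]⟩
  · refine ⟨(2, delRule [] [3] [], 1), by simp [anbnSystem], rfl, rfl, ?_, ?_⟩
    · intro h; simp [delRule] at h
    · intro _
      exact ⟨aa n, bb n, by simp [delRule], by simp [delRule]⟩

private lemma lang_eq : language anbnSystem = anbnLang := by
  ext w
  constructor
  · rintro ⟨hT, x, hx, f, hf, hd⟩
    simp only [anbnSystem, Finset.mem_singleton] at hx hf
    subst hx; subst hf
    have hinv : Inv (w, 1) :=
      inv_derives hd (Or.inl ⟨rfl, Or.inl ⟨0, rfl⟩⟩)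
    have hT' : ∀ a ∈ w, a ∈ ({0, 1} : Finset ℕ) := hT
    rcases hinv with ⟨_, hc⟩ | ⟨hc2, _⟩
    · rcases hc with ⟨n, hn⟩ | ⟨n, hn⟩ | ⟨n, m, hn⟩ | ⟨_, hn3⟩
      · have hn' : w = 2 :: (aa n ++ 3 :: bb n) := hn
        exact absurd (hT' 2 (by rw [hn']; simp)) (by decide)
      · exact ⟨n, hn⟩
      · have hn' : w = 2 :: (aa n ++ bb m) := hn
        exact absurd (hT' 2 (by rw [hn']; simp)) (by decide)
      · exact absurd (hT' 3 hn3) (by decide)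
    · simp at hc2
  · rintro ⟨n, rfl⟩
    refine ⟨?_, [2,3], by simp [anbnSystem], 1, by simp [anbnSystem], derives_final n⟩
    intro a ha
    simp only [List.mem_append, List.mem_replicate] at ha
    rcases ha with ⟨_, rfl⟩ | ⟨_, rfl⟩ <;> simp [anbnSystem]

/-- The system `anbnSystem` is star-controlled, generates exactly the
non-regular language `{ aⁿbⁿ : n ≥ 0 }`, and in particular this language
belongs to `GCID_S(2; 1, 1, 0; 1, 0, 0)`. -/
theorem anbnSystem_generates_anbn :
    StarControlled anbnSystem ∧ language anbnSystem = anbnLang ∧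
      anbnLang ∈ GCID_S 2 1 1 0 1 0 0 := by
  have hstar : StarControlled anbnSystem := by
    constructor
    · intro q hq
      simp only [anbnSystem, Finset.mem_insert, Finset.mem_singleton] at hq
      rcases hq with rfl | rfl | rfl | rfl <;>
        exact ⟨2, by decide, by decide⟩
    · intro i hi
      simp only [anbnSystem, Finset.mem_Icc] at hi
      have : i = 2 := le_antisymm hi.2 hi.1
      subst this
      exact ⟨(1, insRule [2] [0] [], 2), by simp [anbnSystem], by decide⟩
  refine ⟨hstar, lang_eq, anbnSystem, hstar, ⟨rfl, ?_⟩, lang_eq⟩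
  intro q hq
  simp only [anbnSystem, Finset.mem_insert, Finset.mem_singleton] at hq
  rcases hq with rfl | rfl | rfl | rfl <;> exact ⟨by decide, by decide⟩


end GCIDPaper
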